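/- Let A be a layered automaton over a finite alphabet Σ, p a leaf state of A, and x a priority with x ≤ layer of p. If x is even and an infinite word w is strongly accepted by μ̂_x(p), then w ∈ L(⟦A⟧,p). Analogously, if x is odd and w is strongly rejected by μ̂_x(p), then w ∉ L(⟦A⟧,p). -/
import Mathlib


open scoped Classical

noncomputable section

/-! ### Infinite words and the parity condition -/

/-- The minimal value occurring infinitely often in a sequence of priorities;
for (eventually) bounded sequences this is the `liminf`. -/
def minInfOften (pi : ℕ → ℕ) : ℕ := sInf {x : ℕ | ∀ N : ℕ, ∃ n : ℕ, N ≤ n ∧ pi n = x}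

/-- The (min-)parity acceptance condition: the liminf of the priorities is even. -/
def ParityAccept (pi : ℕ → ℕ) : Prop := Even (minInfOften pi)

/-- Prepend a finite word to an infinite word. -/
def prependW {α : Type} (u : List α) (w : ℕ → α) : ℕ → α := fun i =>
  if h : i < u.length then u.get ⟨i, h⟩ else w (i - u.length)

/-- The prefix of length `n` of an infinite word, as a list. -/
def wordPrefix {α : Type} (w : ℕ → α) (n : ℕ) : List α := List.ofFn (fun i : Fin n => w i)

/-- Drop the first `n` letters of an infinite word. -/
def wordDrop {α : Type} (w : ℕ → α) (n : ℕ) : ℕ → α := fun i => w (n + i)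

/-- The periodic infinite word `v^ω` (junk if `v = []`). -/
def perWord {α : Type} [Inhabited α] (v : List α) : ℕ → α := fun i => v.getD (i % v.length) default

/-! ### Layered automata -/

/-- A layered automaton over the alphabet `α` with `d` layers.  The (disjoint) layers
are encoded by the function `layer : Q → [1,d]`; each layer is a deterministic
transition system (partial transition function `δ`, which stays inside the layer);
`μ` sends each state of layer `x+1` to its parent in layer `x` (and is the identity
on layer `1`) and is a morphism of transition systems; layer `1` is complete, carries
the initial state, and all its states are reachable from the initial state. -/
structure Layered (Q α : Type) (d : ℕ) where
  layer : Q → ℕ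
  layer_pos : ∀ q, 1 ≤ layer q
  layer_le : ∀ q, layer q ≤ d
  δ : Q → α → Option Q
  δ_layer : ∀ q a q', δ q a = some q' → layer q' = layer q
  μ : Q → Q
  μ_layer : ∀ q, 1 < layer q → layer (μ q) + 1 = layer q
  μ_id : ∀ q, layer q = 1 → μ q = q
  μ_morph : ∀ q a q', 1 < layer q → δ q a = some q' → δ (μ q) a = some (μ q')
  init : Q
  init_layer : layer init = 1
  complete1 : ∀ q a, layer q = 1 → (δ q a).isSome = true
  reach1 : ∀ q, layer q = 1 →
    Relation.ReflTransGen (fun p p' => layer p = 1 ∧ ∃ a, δ p a = some p') init q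

namespace Layered

variable {Q R α : Type} {d d' : ℕ}

/-- The run of the (deterministic) layer transition systems on a finite word. -/
def runList (A : Layered Q α d) : Q → List α → Option Q
  | q, [] => some q
  | q, a :: u =>
    match A.δ q a with
    | some q' => runList A q' u
    | none => none

/-- `μ̂_x q`: the ancestor of `q` in layer `x` (image under the composed morphisms). -/
def muHat (A : Layered Q α d) (x : ℕ) (q : Q) : Q := (A.μ)^[A.layer q - x] q

/-- A leaf state: a state that is not in the image of any of the morphisms `μ_x`. -/
def IsLeaf (A : Layered Q α d) (q : Q) : Prop := ∀ p, 1 < A.layer p → A.μ p ≠ q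

/-- `layer(q,a)`: the largest layer `x ≤ layer q` in which `δ_x (μ̂_x q) a` is defined. -/
def layerOf (A : Layered Q α d) (q : Q) (a : α) : ℕ :=
  Nat.findGreatest (fun x => (A.δ (A.muHat x q) a).isSome = true) (A.layer q)

/-- A state `p` is an ancestor of `q`. -/
def IsAncestor (A : Layered Q α d) (p q : Q) : Prop :=
  A.layer p ≤ A.layer q ∧ A.muHat (A.layer p) q = p

/-! #### Safe languages and strong acceptance -/

/-- Membership of a finite word in the `x`-safe language of `q`. -/
def SafeFin (A : Layered Q α d) (x : ℕ) (q : Q) (u : List α) : Prop :=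
  (A.runList (A.muHat x q) u).isSome = true

/-- Membership of an infinite word in the `x`-safe language of `q`. -/
def SafeInf (A : Layered Q α d) (x : ℕ) (q : Q) (w : ℕ → α) : Prop :=
  ∀ n : ℕ, A.SafeFin x q (wordPrefix w n)

/-- `w` is strongly accepted by the state `p` (which lies in the even layer `x = layer p`):
`w` is `x`-safe from `p` and no decomposition `w = u·w'` admits a state `p'` of layer `x+1`
with a `u`-run from `p` to the parent of `p'` in `T_x` such that `w'` is `(x+1)`-safe from `p'`. -/
def StronglyAcc (A : Layered Q α d) (p : Q) (w : ℕ → α) : Prop :=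
  Even (A.layer p) ∧ A.SafeInf (A.layer p) p w ∧
  ∀ (n : ℕ) (p' : Q), A.layer p' = A.layer p + 1 →
    A.runList p (wordPrefix w n) = some (A.μ p') →
    ¬ A.SafeInf (A.layer p') p' (wordDrop w n)

/-- `w` is strongly rejected by `p` (lying in an odd layer). -/
def StronglyRej (A : Layered Q α d) (p : Q) (w : ℕ → α) : Prop :=
  Odd (A.layer p) ∧ A.SafeInf (A.layer p) p w ∧
  ∀ (n : ℕ) (p' : Q), A.layer p' = A.layer p + 1 →
    A.runList p (wordPrefix w n) = some (A.μ p') →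
    ¬ A.SafeInf (A.layer p') p' (wordDrop w n)

/-- Consistency: no two states with the same layer-1 ancestor strongly accept
resp. strongly reject a common infinite word. -/
def Consistent (A : Layered Q α d) : Prop :=
  ¬ ∃ (p p' : Q) (w : ℕ → α), A.muHat 1 p = A.muHat 1 p' ∧
      A.StronglyAcc p w ∧ A.StronglyRej p' w

/-- `w` is ultimately safe in layer `x`, for the automaton started in the
layer-1 state `q0`. -/
def UltSafeFrom (A : Layered Q α d) (q0 : Q) (x : ℕ) (w : ℕ → α) : Prop :=
  ∃ (n : ℕ) (p : Q), A.layer p = x ∧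
    A.runList q0 (wordPrefix w n) = some (A.muHat 1 p) ∧
    A.SafeInf x p (wordDrop w n)

/-- Layered acceptance from `q0`: the maximal layer in which `w` is ultimately safe is even. -/
def LayeredAcceptFrom (A : Layered Q α d) (q0 : Q) (w : ℕ → α) : Prop :=
  ∃ x : ℕ, Even x ∧ A.UltSafeFrom q0 x w ∧ ∀ y : ℕ, A.UltSafeFrom q0 y w → y ≤ x

/-- Layered rejection from `q0`: the maximal layer in which `w` is ultimately safe is odd. -/
def LayeredRejectFrom (A : Layered Q α d) (q0 : Q) (w : ℕ → α) : Prop :=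
  ∃ x : ℕ, Odd x ∧ A.UltSafeFrom q0 x w ∧ ∀ y : ℕ, A.UltSafeFrom q0 y w → y ≤ x

/-! #### The semantics automaton `⟦A⟧` (a simple-by-priorities alternating parity automaton) -/

/-- The priority of the letter `a` in the state `q` of `⟦A⟧`. -/
def semPrio (A : Layered Q α d) (q : Q) (a : α) : ℕ := A.layerOf q a

/-- The transitions of `⟦A⟧` (between leaf states): `q —a→ q'` iff, for
`x = layer(q,a)`, we have `δ_x (μ̂_x q) a = μ̂_x q'`; the transition carries priority `x`. -/
def semStep (A : Layered Q α d) (q : Q) (a : α) (q' : Q) : Prop :=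
  A.IsLeaf q' ∧ A.δ (A.muHat (A.layerOf q a) q) a = some (A.muHat (A.layerOf q a) q')

/-- Runs of `⟦A⟧` over the infinite word `w`, starting in `p`. -/
def IsSemRun (A : Layered Q α d) (w : ℕ → α) (p : Q) (ρ : ℕ → Q) : Prop :=
  ρ 0 = p ∧ ∀ i : ℕ, A.semStep (ρ i) (w i) (ρ (i + 1))

/-- The sequence of priorities produced by a run of `⟦A⟧` over `w`. -/
def runPrios (A : Layered Q α d) (w : ℕ → α) (ρ : ℕ → Q) : ℕ → ℕ :=
  fun i => A.semPrio (ρ i) (w i)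

/-- A resolver for Eve in `⟦A⟧`: given the history (the finite run so far, as a list of
(state, letter) pairs), the current state and a letter of odd priority, it picks a successor. -/
def EveResolver (A : Layered Q α d) (σ : List (Q × α) → Q → α → Q) : Prop :=
  ∀ (h : List (Q × α)) (q : Q) (a : α), Odd (A.semPrio q a) → A.semStep q a (σ h q a)

/-- A resolver for Adam in `⟦A⟧` (resolving the even-priority steps). -/
def AdamResolver (A : Layered Q α d) (τ : List (Q × α) → Q → α → Q) : Prop :=
  ∀ (h : List (Q × α)) (q : Q) (a : α), Even (A.semPrio q a) → A.semStep q a (τ h q a)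

/-- A run is consistent with the Eve-resolver `σ`: every odd-priority step follows `σ`. -/
def ConsEve (A : Layered Q α d) (σ : List (Q × α) → Q → α → Q) (w : ℕ → α) (ρ : ℕ → Q) : Prop :=
  ∀ i : ℕ, Odd (A.semPrio (ρ i) (w i)) →
    ρ (i + 1) = σ (List.ofFn fun j : Fin i => (ρ (j : ℕ), w (j : ℕ))) (ρ i) (w i)

/-- A run is consistent with the Adam-resolver `τ`: every even-priority step follows `τ`. -/
def ConsAdam (A : Layered Q α d) (τ : List (Q × α) → Q → α → Q) (w : ℕ → α) (ρ : ℕ → Q) : Prop :=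
  ∀ i : ℕ, Even (A.semPrio (ρ i) (w i)) →
    ρ (i + 1) = τ (List.ofFn fun j : Fin i => (ρ (j : ℕ), w (j : ℕ))) (ρ i) (w i)

/-- Acceptance of `w` by `⟦A⟧` from the (leaf) state `p`: Eve has a winning strategy
in the game `G(⟦A⟧,w)`, i.e. a resolver all of whose consistent runs satisfy parity. -/
def SemAccept (A : Layered Q α d) (p : Q) (w : ℕ → α) : Prop :=
  ∃ σ : List (Q × α) → Q → α → Q, A.EveResolver σ ∧
    ∀ ρ : ℕ → Q, A.IsSemRun w p ρ → A.ConsEve σ w ρ → ParityAccept (A.runPrios w ρ)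

/-- Uniform semantic determinism: leaf states with the same layer-1 ancestor
recognise the same language in `⟦A⟧`. -/
def UnifSD (A : Layered Q α d) : Prop :=
  ∀ p q : Q, A.IsLeaf p → A.IsLeaf q → A.muHat 1 p = A.muHat 1 q →
    ∀ w : ℕ → α, (A.SemAccept p w ↔ A.SemAccept q w)

/-! #### Longest suffix resolvers -/

/-- `v` is a suffix-witness to `r`: the layer of `r` has a run labelled `v` ending in `r`. -/
def suffixReaches (A : Layered Q α d) (r : Q) (v : List α) : Prop :=
  ∃ p : Q, A.layer p = A.layer r ∧ A.runList p v = some r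

/-- The length of the longest suffix `v` of `u` such that the layer of `r` has a
run labelled `v` ending in `r`. -/
def longestSuffixLen (A : Layered Q α d) (u : List α) (r : Q) : ℕ :=
  Nat.findGreatest (fun k => k ≤ u.length ∧ A.suffixReaches r (u.drop (u.length - k))) u.length

/-- A longest suffix resolver for Eve, initialised to `u0`: a valid Eve-resolver that,
at a step of odd priority `x` after having read `v`, moves to an `a`-successor `q'`
maximising the length of the longest `(x+1)`-suffix of `u0·v·a` to `μ̂_{x+1} q'`. -/
def IsLongestSuffixResolverE (A : Layered Q α d) (u0 : List α)
    (σ : List (Q × α) → Q → α → Q) : Prop :=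
  A.EveResolver σ ∧
  ∀ (h : List (Q × α)) (q : Q) (a : α), Odd (A.semPrio q a) →
    ∀ q' : Q, A.semStep q a q' →
      A.longestSuffixLen (u0 ++ h.map Prod.snd ++ [a]) (A.muHat (A.semPrio q a + 1) q') ≤
      A.longestSuffixLen (u0 ++ h.map Prod.snd ++ [a]) (A.muHat (A.semPrio q a + 1) (σ h q a))

/-- A longest suffix resolver for Adam, initialised to `u0` (symmetric, for even priorities). -/
def IsLongestSuffixResolverA (A : Layered Q α d) (u0 : List α)
    (τ : List (Q × α) → Q → α → Q) : Prop :=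
  A.AdamResolver τ ∧
  ∀ (h : List (Q × α)) (q : Q) (a : α), Even (A.semPrio q a) →
    ∀ q' : Q, A.semStep q a q' →
      A.longestSuffixLen (u0 ++ h.map Prod.snd ++ [a]) (A.muHat (A.semPrio q a + 1) q') ≤
      A.longestSuffixLen (u0 ++ h.map Prod.snd ++ [a]) (A.muHat (A.semPrio q a + 1) (τ h q a))

/-! #### The random walk on `⟦A⟧` -/

/-- The uniform step probability of the random walk of `⟦A⟧`. -/
def stepProb (A : Layered Q α d) (q : Q) (a : α) (q' : Q) : ENNReal :=
  if A.semStep q a q' then ((Nat.card {p : Q // A.semStep q a p} : ENNReal))⁻¹ else 0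

/-- `m` is the Markov measure of the random walk of `⟦A⟧` over the word `w` started at `p`:
a probability measure on `ℕ → Q` whose cylinder probabilities are the products of the
uniform step probabilities. -/
def IsWalkMeasure [MeasurableSpace Q] (A : Layered Q α d) (w : ℕ → α) (p : Q)
    (m : MeasureTheory.Measure (ℕ → Q)) : Prop :=
  MeasureTheory.IsProbabilityMeasure m ∧
  ∀ (n : ℕ) (s : Fin (n + 1) → Q),
    m {ρ : ℕ → Q | ∀ i : Fin (n + 1), ρ (i : ℕ) = s i} =
      (if s 0 = p then 1 else 0) *
        ∏ i : Fin n, A.stepProb (s i.castSucc) (w (i : ℕ)) (s i.succ)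

/-! #### Normal form, centrality, safe minimality, central sequences -/

/-- Normal form: (N1) every layer `x ≥ 2` is a union of non-trivial SCCs, and
(N2) the safe language of every child is strictly smaller than that of its parent. -/
def NormalForm (A : Layered Q α d) : Prop :=
  ∀ q : Q, 2 ≤ A.layer q →
    (∀ (u : List α) (q' : Q), A.runList q u = some q' →
      ∃ v : List α, v ≠ [] ∧ A.runList q' v = some q) ∧
    (∀ p : Q, 1 < A.layer p → A.μ p = q →
      ∃ u : List α, (A.runList q u).isSome = true ∧ A.runList p u = none)

/-- Inclusion of `x`-safe languages. -/
def SafeLE (A : Layered Q α d) (x : ℕ) (p q : Q) : Prop :=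
  (∀ u : List α, A.SafeFin x p u → A.SafeFin x q u) ∧
  (∀ w : ℕ → α, A.SafeInf x p w → A.SafeInf x q w)

/-- Centralised: siblings (same parent) whose safe languages are included,
lie in the same SCC of their layer. -/
def Centralised (A : Layered Q α d) : Prop :=
  ∀ p q : Q, 2 ≤ A.layer p → A.layer q = A.layer p →
    A.muHat (A.layer p - 1) p = A.muHat (A.layer p - 1) q →
    A.SafeLE (A.layer p) p q →
    (∃ u : List α, A.runList p u = some q) ∧ (∃ v : List α, A.runList q v = some p)

/-- `L(p) = L(q)`: all leaves above (the layer-1 ancestor of) `p` and all leaves above `q`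
recognise the same language in `⟦A⟧`. -/
def LangEq1 (A : Layered Q α d) (p q : Q) : Prop :=
  ∀ l l' : Q, A.IsLeaf l → A.IsLeaf l' → A.muHat 1 l = A.muHat 1 p →
    A.muHat 1 l' = A.muHat 1 q → ∀ w : ℕ → α, (A.SemAccept l w ↔ A.SemAccept l' w)

/-- The equivalence `p ≈_x q`: language equivalence together with equality of all
`y`-safe languages for `2 ≤ y ≤ x`. -/
def ApproxEq (A : Layered Q α d) (x : ℕ) (p q : Q) : Prop :=
  A.LangEq1 p q ∧ ∀ y : ℕ, 2 ≤ y → y ≤ x →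
    ((∀ u : List α, A.SafeFin y p u ↔ A.SafeFin y q u) ∧
     (∀ w : ℕ → α, A.SafeInf y p w ↔ A.SafeInf y q w))

/-- Safe minimality: `≈_x`-equivalent states of the same layer are equal. -/
def SafeMinimal (A : Layered Q α d) : Prop :=
  ∀ p q : Q, A.layer p = A.layer q → A.ApproxEq (A.layer p) p q → p = q

/-- `z` is a central sequence for the state `p` (of layer `x = layer p`). -/
def IsCentralSeq (A : Layered Q α d) (p : Q) (z : List α) : Prop :=
  z ≠ [] ∧ A.runList p z = some p ∧
  (∀ q : Q, A.layer q = A.layer p →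
    A.muHat (A.layer p - 1) q = A.muHat (A.layer p - 1) p →
    (A.runList q z = some p ∨ A.runList q z = none)) ∧
  (∀ q' : Q, A.layer q' = A.layer p + 1 →
    A.muHat (A.layer p - 1) q' = A.muHat (A.layer p - 1) p →
    A.runList q' z = none)

end Layered

/-! ### Morphisms of layered automata -/

/-- A morphism of layered automata. -/
structure IsLayMorphism {Q R α : Type} {d d' : ℕ} (A : Layered Q α d) (B : Layered R α d')
    (φ : Q → R) : Prop where
  map_init : φ A.init = B.init
  map_step : ∀ q a q', A.δ q a = some q' → B.δ (φ q) a = some (φ q')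
  map_anc : ∀ p q, A.IsAncestor p q → B.IsAncestor (φ p) (φ q)

/-- A strong morphism of layered automata additionally preserves non-transitions. -/
def IsStrongLayMorphism {Q R α : Type} {d d' : ℕ} (A : Layered Q α d) (B : Layered R α d')
    (φ : Q → R) : Prop :=
  IsLayMorphism A B φ ∧ ∀ q a, A.δ q a = none → B.δ (φ q) a = none

/-- An isomorphism of layered automata: a bijection on states that restricts to
isomorphisms of the layer transition systems, preserves the initial state, and
commutes with the morphisms `μ`. -/
structure IsLayIso {Q R α : Type} {d d' : ℕ} (A : Layered Q α d) (B : Layered R α d')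
    (φ : Q ≃ R) : Prop where
  map_layer : ∀ q, B.layer (φ q) = A.layer q
  map_init : φ A.init = B.init
  map_mu : ∀ q, φ (A.μ q) = B.μ (φ q)
  map_step : ∀ q a, (A.δ q a).map φ = B.δ (φ q) a

/-- `L(⟦A⟧) = L(⟦B⟧)`: the semantics automata (with any choice of initial leaf states
above the respective initial states) accept the same infinite words. -/
def SemLangEq {Q R α : Type} {d d' : ℕ} (A : Layered Q α d) (B : Layered R α d') : Prop :=
  ∀ (p : Q) (q : R), A.IsLeaf p → A.muHat 1 p = A.init → B.IsLeaf q → B.muHat 1 q = B.init →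
    ∀ w : ℕ → α, (A.SemAccept p w ↔ B.SemAccept q w)

/-! ### Deterministic parity automata -/

/-- A deterministic parity automaton over `α` with priorities in `[1,d]`. -/
structure DPA (Q α : Type) (d : ℕ) where
  init : Q
  next : Q → α → Q
  prio : Q → α → ℕ
  prio_pos : ∀ q a, 1 ≤ prio q a
  prio_le : ∀ q a, prio q a ≤ d

namespace DPA

variable {Q α : Type} {d : ℕ}

/-- The unique run of a DPA on an infinite word. -/
def run (B : DPA Q α d) (w : ℕ → α) : ℕ → Q
  | 0 => B.init
  | n + 1 => B.next (run B w n) (w n)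

/-- Acceptance by a DPA: the priorities along the unique run satisfy parity. -/
def Accepts (B : DPA Q α d) (w : ℕ → α) : Prop :=
  ParityAccept (fun i => B.prio (B.run w i) (w i))

end DPA

/-- `L` is ω-regular: recognised by some deterministic parity automaton. -/
def IsOmegaRegular {α : Type} (L : Set (ℕ → α)) : Prop :=
  ∃ (n d : ℕ) (B : DPA (Fin n) α d), ∀ w : ℕ → α, w ∈ L ↔ B.Accepts w

/-! ### Nondeterministic coBüchi automata -/

/-- A (complete) nondeterministic coBüchi automaton: transitions carry priorities in `{1,2}`. -/
structure NCA (Q α : Type) where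
  init : Q
  trans : Q → α → ℕ → Q → Prop
  prio_mem : ∀ q a x q', trans q a x q' → x = 1 ∨ x = 2
  complete : ∀ q a, ∃ x q', trans q a x q'

namespace NCA

variable {Q α : Type}

/-- Nondeterministic acceptance from the state `q`. -/
def AcceptFrom (B : NCA Q α) (q : Q) (w : ℕ → α) : Prop :=
  ∃ (ρ : ℕ → Q) (pri : ℕ → ℕ), ρ 0 = q ∧
    (∀ i : ℕ, B.trans (ρ i) (w i) (pri i) (ρ (i + 1))) ∧ ParityAccept pri

/-- Semantic determinism: every `a`-successor of `p` recognises `a⁻¹ L(p)`. -/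
def SemDet (B : NCA Q α) : Prop :=
  ∀ p a x q, B.trans p a x q →
    ∀ w : ℕ → α, (B.AcceptFrom q w ↔ B.AcceptFrom p (prependW [a] w))

/-- Safe determinism: all `a`-transitions from a state carry the same priority, and
there is at most one `a`-transition of priority `2` from each state. -/
def SafeDet (B : NCA Q α) : Prop :=
  (∀ q a x q' x' q'', B.trans q a x q' → B.trans q a x' q'' → x = x') ∧
  (∀ q a q' q'', B.trans q a 2 q' → B.trans q a 2 q'' → q' = q'')

/-- 1-saturation: priority-1 transitions go to all language-equivalent states. -/
def OneSaturated (B : NCA Q α) : Prop :=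
  ∀ q a p p', B.trans q a 1 p →
    (∀ w : ℕ → α, (B.AcceptFrom p' w ↔ B.AcceptFrom p w)) → B.trans q a 1 p'

end NCA

/-! ### Simple-by-priorities alternating parity automata (abstract) -/

/-- A simple-by-priorities alternating parity automaton: a complete transition system
over `α × [1,d]` in which all `a`-transitions from a state carry the same priority. -/
structure SPA (Q α : Type) (d : ℕ) where
  init : Q
  step : Q → α → Q → Prop
  prio : Q → α → ℕ
  prio_pos : ∀ q a, 1 ≤ prio q a
  prio_le : ∀ q a, prio q a ≤ d
  complete : ∀ q a, ∃ q', step q a q'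

/-! ### The congruence on tuples of finite words -/

/-- The data of the congruence at one level (tuples of a fixed length,
represented as reversed lists of components: the head is the last component). -/
structure CongrLevel (α : Type) where
  bot : List (List α) → Prop
  eq : List (List α) → List (List α) → Prop
  ptd : List (List α) → Prop

/-- Concatenate a finite word to the last component of a tuple
(tuples are represented as reversed lists: the head is the last component). -/
def tcat {α : Type} (t : List (List α)) (v : List α) : List (List α) :=
  match t with
  | h :: rest => (h ++ v) :: rest
  | [] => []

/-- Merge the last two components of a tuple. -/
def tmerge {α : Type} (t : List (List α)) : List (List α) :=
  match t with
  | u' :: h :: rest => (h ++ u') :: rest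
  | t' => t'

/-- The congruence data at level `n` (handling tuples of length `n+1`), defined by
recursion on the level, following the inductive definition of `≈ ⊥`, `≈` and `pointed`. -/
def congrData {α : Type} [Inhabited α] (L : Set (ℕ → α)) : ℕ → CongrLevel α
  | 0 =>
    { bot := fun _ => False
      eq := fun t s =>
        match t, s with
        | [u], [v] => ∀ w : ℕ → α, (prependW u w ∈ L ↔ prependW v w ∈ L)
        | _, _ => False
      ptd := fun _ => True }
  | n + 1 =>
    let C := congrData L n
    let bot : List (List α) → Prop := fun t =>
      match t with
      | u' :: ubar =>
        C.bot (tmerge (u' :: ubar)) ∨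
        ∀ w : List α, w ≠ [] → C.eq (tcat (tmerge (u' :: ubar)) w) ubar →
          ((prependW ubar.reverse.flatten (perWord (u' ++ w)) ∈ L) ↔ Even (n + 1))
      | [] => True
    let eq : List (List α) → List (List α) → Prop := fun t s =>
      C.eq (tmerge t) (tmerge s) ∧ ∀ v : List α, (bot (tcat t v) ↔ bot (tcat s v))
    let ptd : List (List α) → Prop := fun t =>
      match t with
      | u' :: ubar =>
        ¬ bot (u' :: ubar) ∧ C.ptd ubar ∧
        ∀ (vbar : List (List α)) (v' : List α), vbar.length = n + 1 → C.ptd vbar →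
          C.eq (tcat vbar v') ubar → ¬ bot ((v' ++ u') :: vbar) →
          eq ((v' ++ u') :: vbar) (u' :: ubar)
      | [] => False
    { bot := bot, eq := eq, ptd := ptd }

/-- `t ≈ ⊥` (for a nonempty tuple `t`, in reversed representation). -/
def TupBot {α : Type} [Inhabited α] (L : Set (ℕ → α)) (t : List (List α)) : Prop :=
  (congrData L (t.length - 1)).bot t

/-- `t ≈ s` (for nonempty tuples of the same length, in reversed representation). -/
def TupEq {α : Type} [Inhabited α] (L : Set (ℕ → α)) (t s : List (List α)) : Prop :=
  t.length = s.length ∧ (congrData L (t.length - 1)).eq t s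

/-- `t` is pointed. -/
def TupPointed {α : Type} [Inhabited α] (L : Set (ℕ → α)) (t : List (List α)) : Prop :=
  (congrData L (t.length - 1)).ptd t

/-- `cls` exhibits `A` as (a copy of) the congruence automaton `A_≈` of `L`: its states
are the `≈`-classes of pointed tuples (the layer being the tuple length), transitions
are given by concatenation in the last component, the initial state is the class of
`(ε)`, and the morphisms are given by merging the last two components. -/
structure IsCongrAut {α : Type} [Inhabited α] (L : Set (ℕ → α)) {Q : Type} {d : ℕ}
    (A : Layered Q α d) (cls : (t : List (List α)) → TupPointed L t → Q) : Prop where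
  surj : ∀ q : Q, ∃ (t : List (List α)) (ht : TupPointed L t), cls t ht = q
  cls_eq : ∀ t ht s hs, cls t ht = cls s hs ↔ TupEq L t s
  layer_eq : ∀ t ht, A.layer (cls t ht) = t.length
  init_eq : ∀ h : TupPointed L [([] : List α)], cls [([] : List α)] h = A.init
  step_some : ∀ t ht (a : α) (h' : TupPointed L (tcat t [a])),
    A.δ (cls t ht) a = some (cls (tcat t [a]) h')
  step_none : ∀ t ht (a : α), TupBot L (tcat t [a]) → A.δ (cls t ht) a = none
  mu_eq : ∀ (u' : List α) (ubar : List (List α)) (h : TupPointed L (u' :: ubar))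
    (h' : TupPointed L (tmerge (u' :: ubar))), ubar ≠ [] →
    A.μ (cls (u' :: ubar) h) = cls (tmerge (u' :: ubar)) h'

end

noncomputable section Aux7

namespace Layered

variable {Q α : Type} {d : ℕ}

lemma layer_iterate_mu (A : Layered Q α d) (q : Q) :
    ∀ k, k < A.layer q → A.layer ((A.μ)^[k] q) = A.layer q - k := by
  intro k
  induction k with
  | zero => intro _; simp
  | succ k ih =>
    intro hk
    have h1 : A.layer ((A.μ)^[k] q) = A.layer q - k := ih (by omega)
    rw [Function.iterate_succ_apply']
    have h2 : 1 < A.layer ((A.μ)^[k] q) := by omega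
    have h3 := A.μ_layer _ h2
    omega

lemma layer_muHat (A : Layered Q α d) (x : ℕ) (q : Q) (h1 : 1 ≤ x) (h2 : x ≤ A.layer q) :
    A.layer (A.muHat x q) = x := by
  unfold muHat
  have := A.layer_iterate_mu q (A.layer q - x) (by omega)
  omega

lemma muHat_eq_self (A : Layered Q α d) (x : ℕ) (q : Q) (h : A.layer q ≤ x) :
    A.muHat x q = q := by
  unfold muHat
  rw [Nat.sub_eq_zero_of_le h]
  rfl

lemma muHat_succ (A : Layered Q α d) (x : ℕ) (q : Q) (h : x < A.layer q) :
    A.muHat x q = A.μ (A.muHat (x + 1) q) := by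
  unfold muHat
  rw [show A.layer q - x = (A.layer q - (x + 1)) + 1 by omega, Function.iterate_succ_apply']

lemma step_down (A : Layered Q α d) :
    ∀ (k x : ℕ) (q : Q) (a : α) (q' : Q), 1 ≤ x → x + k ≤ A.layer q → x + k ≤ A.layer q' →
      A.δ (A.muHat (x + k) q) a = some (A.muHat (x + k) q') →
      A.δ (A.muHat x q) a = some (A.muHat x q') := by
  intro k
  induction k with
  | zero => intro x q a q' _ _ _ h; simpa using h
  | succ k ih =>
    intro x q a q' hx hq hq' h
    apply ih x q a q' hx (by omega) (by omega)
    have hl : 1 < A.layer (A.muHat (x + k + 1) q) := by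
      rw [A.layer_muHat _ _ (by omega) (by omega)]; omega
    rw [A.muHat_succ (x + k) q (by omega), A.muHat_succ (x + k) q' (by omega)]
    exact A.μ_morph _ a _ hl h

lemma step_down' (A : Layered Q α d) {x y : ℕ} (q : Q) (a : α) (q' : Q)
    (hx : 1 ≤ x) (hxy : x ≤ y) (hq : y ≤ A.layer q) (hq' : y ≤ A.layer q')
    (h : A.δ (A.muHat y q) a = some (A.muHat y q')) :
    A.δ (A.muHat x q) a = some (A.muHat x q') := by
  obtain ⟨k, rfl⟩ := Nat.exists_eq_add_of_le hxy
  exact A.step_down k x q a q' hx hq hq' h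

lemma runList_append (A : Layered Q α d) (u v : List α) :
    ∀ q, A.runList q (u ++ v) = (A.runList q u).bind (fun r => A.runList r v) := by
  induction u with
  | nil => intro q; simp [runList]
  | cons a u ih =>
    intro q
    rw [List.cons_append]
    show (match A.δ q a with
      | some q' => A.runList q' (u ++ v)
      | none => none) = (match A.δ q a with
      | some q' => A.runList q' u
      | none => none).bind (fun r => A.runList r v)
    cases h : A.δ q a with
    | none => simp
    | some q' => simp [ih]

lemma runList_singleton (A : Layered Q α d) (q : Q) (a : α) :
    A.runList q [a] = A.δ q a := by
  show (match A.δ q a with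
    | some q' => A.runList q' []
    | none => none) = A.δ q a
  cases h : A.δ q a <;> rfl

lemma wordPrefix_zero {w : ℕ → α} : wordPrefix w 0 = [] := rfl

lemma wordPrefix_succ {w : ℕ → α} (n : ℕ) :
    wordPrefix w (n + 1) = wordPrefix w n ++ [w n] := by
  unfold wordPrefix
  rw [List.ofFn_succ']
  simp

lemma layerOf_le (A : Layered Q α d) (q : Q) (a : α) : A.layerOf q a ≤ A.layer q := by
  unfold layerOf
  exact Nat.findGreatest_le _

lemma layerOf_pos (A : Layered Q α d) (q : Q) (a : α) : 1 ≤ A.layerOf q a := by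
  apply Nat.le_findGreatest (A.layer_pos q)
  exact A.complete1 _ a (A.layer_muHat 1 q le_rfl (A.layer_pos q))

lemma le_layerOf (A : Layered Q α d) (q : Q) (a : α) (x : ℕ) (hx : x ≤ A.layer q)
    (h : (A.δ (A.muHat x q) a).isSome = true) : x ≤ A.layerOf q a :=
  Nat.le_findGreatest hx h

lemma layerOf_spec (A : Layered Q α d) (q : Q) (a : α) :
    (A.δ (A.muHat (A.layerOf q a) q) a).isSome = true := by
  unfold layerOf
  exact Nat.findGreatest_spec (P := fun x => (A.δ (A.muHat x q) a).isSome = true)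
    (A.layer_pos q) (A.complete1 _ a (A.layer_muHat 1 q le_rfl (A.layer_pos q)))

lemma semStep_le_layer' (A : Layered Q α d) {q : Q} {a : α} {q' : Q}
    (h : A.semStep q a q') : A.layerOf q a ≤ A.layer q' := by
  by_contra hc
  push_neg at hc
  have h1 : A.muHat (A.layerOf q a) q' = q' := A.muHat_eq_self _ _ (le_of_lt hc)
  have h2 := A.δ_layer _ a _ h.2
  rw [h1, A.layer_muHat _ _ (A.layerOf_pos q a) (A.layerOf_le q a)] at h2
  omega

lemma exists_leaf_above (A : Layered Q α d) :
    ∀ (n : ℕ) (r : Q), d - A.layer r ≤ n →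
      ∃ q', A.IsLeaf q' ∧ A.layer r ≤ A.layer q' ∧ A.muHat (A.layer r) q' = r := by
  intro n
  induction n with
  | zero =>
    intro r hr
    by_cases hs : ∃ s, 1 < A.layer s ∧ A.μ s = r
    · obtain ⟨s, hs1, hs2⟩ := hs
      have h1 := A.μ_layer s hs1
      have h2 := A.layer_le s
      rw [hs2] at h1
      have h3 := A.layer_le r
      omega
    · exact ⟨r, fun s h1 h2 => hs ⟨s, h1, h2⟩, le_rfl, A.muHat_eq_self _ _ le_rfl⟩
  | succ n ih =>
    intro r hr
    by_cases hs : ∃ s, 1 < A.layer s ∧ A.μ s = r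
    · obtain ⟨s, hs1, hs2⟩ := hs
      have h1 := A.μ_layer s hs1
      rw [hs2] at h1
      obtain ⟨q', hleaf, hle, hmu⟩ := ih s (by omega)
      refine ⟨q', hleaf, by omega, ?_⟩
      rw [A.muHat_succ _ _ (by omega)]
      rw [show A.layer r + 1 = A.layer s by omega, hmu, hs2]
    · exact ⟨r, fun s h1 h2 => hs ⟨s, h1, h2⟩, le_rfl, A.muHat_eq_self _ _ le_rfl⟩

lemma semStep_total (A : Layered Q α d) (q : Q) (a : α) : ∃ q', A.semStep q a q' := by
  obtain ⟨r, hr⟩ := Option.isSome_iff_exists.mp (A.layerOf_spec q a)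
  have hlr : A.layer r = A.layerOf q a := by
    have := A.δ_layer _ a _ hr
    rwa [A.layer_muHat _ _ (A.layerOf_pos q a) (A.layerOf_le q a)] at this
  obtain ⟨q', hleaf, hle, hmu⟩ := A.exists_leaf_above d r (by omega)
  refine ⟨q', hleaf, ?_⟩
  rw [hlr] at hmu
  rw [hmu]
  exact hr

lemma run_track (A : Layered Q α d) (x : ℕ) (p : Q) (hx1 : 1 ≤ x) (hx : x ≤ A.layer p)
    (w : ℕ → α)
    (hsafe : ∀ n, (A.runList (A.muHat x p) (wordPrefix w n)).isSome = true)
    (ρ : ℕ → Q) (hρ : A.IsSemRun w p ρ) :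
    ∀ n, A.runList (A.muHat x p) (wordPrefix w n) = some (A.muHat x (ρ n)) ∧
      x ≤ A.layer (ρ n) := by
  intro n
  induction n with
  | zero =>
    refine ⟨?_, ?_⟩
    · rw [hρ.1]; rfl
    · rw [hρ.1]; exact hx
  | succ n ih =>
    obtain ⟨ihr, ihl⟩ := ih
    have hδ : (A.δ (A.muHat x (ρ n)) (w n)).isSome = true := by
      have h1 := hsafe (n + 1)
      rw [wordPrefix_succ, A.runList_append, ihr] at h1
      simpa [A.runList_singleton] using h1
    have hxo : x ≤ A.layerOf (ρ n) (w n) := A.le_layerOf _ _ _ ihl hδ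
    obtain ⟨hleaf, hstep⟩ := hρ.2 n
    have hle' : A.layerOf (ρ n) (w n) ≤ A.layer (ρ (n + 1)) := A.semStep_le_layer' (hρ.2 n)
    have hstep' : A.δ (A.muHat x (ρ n)) (w n) = some (A.muHat x (ρ (n + 1))) :=
      A.step_down' _ _ _ hx1 hxo (A.layerOf_le _ _) hle' hstep
    refine ⟨?_, le_trans hxo hle'⟩
    rw [wordPrefix_succ, A.runList_append, ihr]
    simp [A.runList_singleton, hstep']

lemma run_prio_ge (A : Layered Q α d) (x : ℕ) (p : Q) (hx1 : 1 ≤ x) (hx : x ≤ A.layer p)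
    (w : ℕ → α)
    (hsafe : ∀ n, (A.runList (A.muHat x p) (wordPrefix w n)).isSome = true)
    (ρ : ℕ → Q) (hρ : A.IsSemRun w p ρ) :
    ∀ n, x ≤ A.layerOf (ρ n) (w n) := by
  intro n
  obtain ⟨ihr, ihl⟩ := A.run_track x p hx1 hx w hsafe ρ hρ n
  have hδ : (A.δ (A.muHat x (ρ n)) (w n)).isSome = true := by
    have h1 := hsafe (n + 1)
    rw [wordPrefix_succ, A.runList_append, ihr] at h1
    simpa [A.runList_singleton] using h1
  exact A.le_layerOf _ _ _ ihl hδ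

lemma minInf_eq (A : Layered Q α d) (x : ℕ) (p : Q) (hx1 : 1 ≤ x) (hx : x ≤ A.layer p)
    (w : ℕ → α)
    (hsafe : ∀ n, (A.runList (A.muHat x p) (wordPrefix w n)).isSome = true)
    (hesc : ∀ (n : ℕ) (p' : Q), A.layer p' = x + 1 →
      A.runList (A.muHat x p) (wordPrefix w n) = some (A.μ p') →
      ¬ A.SafeInf (A.layer p') p' (wordDrop w n))
    (ρ : ℕ → Q) (hρ : A.IsSemRun w p ρ) :
    minInfOften (A.runPrios w ρ) = x := by
  have hge : ∀ n, x ≤ A.runPrios w ρ n := A.run_prio_ge x p hx1 hx w hsafe ρ hρ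
  have hinf : ∀ N, ∃ n, N ≤ n ∧ A.runPrios w ρ n = x := by
    by_contra hc
    push_neg at hc
    obtain ⟨N, hN⟩ := hc
    have hgt : ∀ n, N ≤ n → x + 1 ≤ A.layerOf (ρ n) (w n) := by
      intro n hn
      have h1 := hge n
      have h2 := hN n hn
      have : A.runPrios w ρ n = A.layerOf (ρ n) (w n) := rfl
      omega
    have hxl : x + 1 ≤ A.layer (ρ N) := le_trans (hgt N le_rfl) (A.layerOf_le _ _)
    have hlp' : A.layer (A.muHat (x + 1) (ρ N)) = x + 1 := A.layer_muHat _ _ (by omega) hxl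
    have htr := (A.run_track x p hx1 hx w hsafe ρ hρ N).1
    have hμ : A.μ (A.muHat (x + 1) (ρ N)) = A.muHat x (ρ N) :=
      (A.muHat_succ x (ρ N) (by omega)).symm
    apply hesc N (A.muHat (x + 1) (ρ N)) hlp' (by rw [hμ]; exact htr)
    have key : ∀ m, A.runList (A.muHat (x + 1) (ρ N)) (wordPrefix (wordDrop w N) m) =
        some (A.muHat (x + 1) (ρ (N + m))) := by
      intro m
      induction m with
      | zero => rfl
      | succ m ihm =>
        rw [wordPrefix_succ, A.runList_append, ihm]
        have hstep := hρ.2 (N + m)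
        have h1 : x + 1 ≤ A.layerOf (ρ (N + m)) (w (N + m)) := hgt _ (by omega)
        have h2 := A.semStep_le_layer' hstep
        have h3 := A.layerOf_le (ρ (N + m)) (w (N + m))
        have hδ : A.δ (A.muHat (x + 1) (ρ (N + m))) (w (N + m)) =
            some (A.muHat (x + 1) (ρ (N + m + 1))) :=
          A.step_down' _ _ _ (by omega) h1 h3 h2 hstep.2
        have hwd : wordDrop w N m = w (N + m) := rfl
        rw [show N + (m + 1) = N + m + 1 from rfl]
        simp [A.runList_singleton, hwd, hδ]
    rw [hlp']
    intro m
    show (A.runList (A.muHat (x + 1) (A.muHat (x + 1) (ρ N)))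
      (wordPrefix (wordDrop w N) m)).isSome = true
    rw [A.muHat_eq_self _ _ (le_of_eq hlp'), key m]
    rfl
  unfold minInfOften
  apply le_antisymm
  · exact Nat.sInf_le hinf
  · have hne : Set.Nonempty {y : ℕ | ∀ N, ∃ n, N ≤ n ∧ A.runPrios w ρ n = y} := ⟨x, hinf⟩
    apply le_csInf hne
    intro y hy
    obtain ⟨n, _, hn⟩ := hy 0
    rw [← hn]
    exact hge n

/-- A run construction following the Eve-resolver `σ` at odd steps and `τ` at even steps,
keeping track of the history. -/
def runAux (A : Layered Q α d) (σ : List (Q × α) → Q → α → Q) (τ : Q → α → Q)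
    (w : ℕ → α) (p : Q) : ℕ → Q × List (Q × α)
  | 0 => (p, [])
  | n + 1 =>
    let g := runAux A σ τ w p n
    (if Odd (A.semPrio g.1 (w n)) then σ g.2 g.1 (w n) else τ g.1 (w n),
     g.2 ++ [(g.1, w n)])

lemma runAux_hist (A : Layered Q α d) (σ : List (Q × α) → Q → α → Q) (τ : Q → α → Q)
    (w : ℕ → α) (p : Q) : ∀ n,
    (runAux A σ τ w p n).2 =
      List.ofFn (fun j : Fin n => ((runAux A σ τ w p (j : ℕ)).1, w (j : ℕ))) := by
  intro n
  induction n with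
  | zero => rfl
  | succ n ih =>
    rw [List.ofFn_succ']
    show (runAux A σ τ w p n).2 ++ [((runAux A σ τ w p n).1, w n)] = _
    rw [ih]
    simp

end Layered

end Aux7

/-- Let `p` be a leaf state and `x ≤ layer p` a priority.  If `x` is even
and `w` is strongly accepted by `μ̂_x p`, then `w ∈ L(⟦A⟧, p)`; if `x` is odd and `w` is
strongly rejected by `μ̂_x p`, then `w ∉ L(⟦A⟧, p)`. -/
theorem statement_7 {Q α : Type} [Fintype Q] [Fintype α] [Nonempty α] {d : ℕ} (hd : 1 ≤ d)
    (A : Layered Q α d) (p : Q) (hp : A.IsLeaf p)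
    (x : ℕ) (hx1 : 1 ≤ x) (hx : x ≤ A.layer p) (w : ℕ → α) :
    (Even x → A.StronglyAcc (A.muHat x p) w → A.SemAccept p w) ∧
    (Odd x → A.StronglyRej (A.muHat x p) w → ¬ A.SemAccept p w) := by
  have hlx : A.layer (A.muHat x p) = x := A.layer_muHat x p hx1 hx
  constructor
  · intro hEven hSA
    have hsafe : ∀ n, (A.runList (A.muHat x p) (wordPrefix w n)).isSome = true := by
      intro n
      have h := hSA.2.1 n
      unfold Layered.SafeFin at h
      rwa [hlx, A.muHat_eq_self _ _ (le_of_eq hlx)] at h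
    have hesc : ∀ (n : ℕ) (p' : Q), A.layer p' = x + 1 →
        A.runList (A.muHat x p) (wordPrefix w n) = some (A.μ p') →
        ¬ A.SafeInf (A.layer p') p' (wordDrop w n) :=
      fun n p' h1 h2 => hSA.2.2 n p' (by rw [hlx]; exact h1) h2
    refine ⟨fun _ q a => Classical.choose (A.semStep_total q a),
      fun h q a _ => Classical.choose_spec (A.semStep_total q a), ?_⟩
    intro ρ hrun _
    unfold ParityAccept
    rw [A.minInf_eq x p hx1 hx w hsafe hesc ρ hrun]
    exact hEven
  · intro hOdd hSR hAcc
    have hsafe : ∀ n, (A.runList (A.muHat x p) (wordPrefix w n)).isSome = true := by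
      intro n
      have h := hSR.2.1 n
      unfold Layered.SafeFin at h
      rwa [hlx, A.muHat_eq_self _ _ (le_of_eq hlx)] at h
    have hesc : ∀ (n : ℕ) (p' : Q), A.layer p' = x + 1 →
        A.runList (A.muHat x p) (wordPrefix w n) = some (A.μ p') →
        ¬ A.SafeInf (A.layer p') p' (wordDrop w n) :=
      fun n p' h1 h2 => hSR.2.2 n p' (by rw [hlx]; exact h1) h2
    obtain ⟨σ, hσ, hwin⟩ := hAcc
    set τ : Q → α → Q := fun q a => Classical.choose (A.semStep_total q a) with hτ
    have τspec : ∀ (q : Q) (a : α), A.semStep q a (τ q a) :=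
      fun q a => Classical.choose_spec (A.semStep_total q a)
    set ρ : ℕ → Q := fun n => (Layered.runAux A σ τ w p n).1 with hρdef
    have hrun : A.IsSemRun w p ρ := by
      refine ⟨rfl, ?_⟩
      intro i
      show A.semStep (ρ i) (w i) (Layered.runAux A σ τ w p (i + 1)).1
      show A.semStep (ρ i) (w i)
        (if Odd (A.semPrio (ρ i) (w i)) then
          σ (Layered.runAux A σ τ w p i).2 (ρ i) (w i) else τ (ρ i) (w i))
      by_cases hodd : Odd (A.semPrio (ρ i) (w i))
      · rw [if_pos hodd]; exact hσ _ _ _ hodd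
      · rw [if_neg hodd]; exact τspec _ _
    have hcons : A.ConsEve σ w ρ := by
      intro i hodd
      show (Layered.runAux A σ τ w p (i + 1)).1 = _
      show (if Odd (A.semPrio (ρ i) (w i)) then
          σ (Layered.runAux A σ τ w p i).2 (ρ i) (w i) else τ (ρ i) (w i)) = _
      rw [if_pos hodd, A.runAux_hist σ τ w p i]
    have hpar := hwin ρ hrun hcons
    unfold ParityAccept at hpar
    rw [A.minInf_eq x p hx1 hx w hsafe hesc ρ hrun] at hpar
    exact (Nat.not_even_iff_odd.mpr hOdd) hpar
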